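/- The entropy of the bidirected pentagon C5 over an alphabet of two letters equals log_2(5): E(C5,2) = log_2 5. -/

import Mathlib

open Finset

/-! ## Basic setup: directed graphs, guessing games, entropy (Riis, "Graph Entropy,
Network Coding and Guessing games"). -/

/-- The set `N⁻(j)` of in-neighbours of a vertex `j` in the directed graph given by
the edge relation `E` (an edge `(i,j)` is `E i j`). -/
def inNbr {V : Type*} [Fintype V] (E : V → V → Prop) [DecidableRel E] (j : V) : Finset V :=
  Finset.univ.filter (fun i => E i j)

/-- `p` is a probability distribution on `V → A`. -/
def IsProbDist {V A : Type*} [Fintype V] [DecidableEq V] [Fintype A] (p : (V → A) → ℝ) : Prop :=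
  (∀ x, 0 ≤ p x) ∧ ∑ x : V → A, p x = 1

/-- The marginal probability, under `p`, that the coordinates in `S` agree with `y`. -/
noncomputable def marginalPMF {V A : Type*} [Fintype V] [DecidableEq V] [Fintype A] [DecidableEq A]
    (p : (V → A) → ℝ) (S : Finset V) (y : ↥S → A) : ℝ :=
  ∑ x : V → A, if ∀ i : ↥S, x i.1 = y i then p x else 0

/-- `Hent s p S` : the base-`s` Shannon entropy of the marginal of `p` on the
coordinates in `S` (using `Real.negMulLog`, so the convention `0·log(1/0) = 0` holds). -/
noncomputable def Hent {V A : Type*} [Fintype V] [DecidableEq V] [Fintype A] [DecidableEq A]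
    (s : ℕ) (p : (V → A) → ℝ) (S : Finset V) : ℝ :=
  (∑ y : ↥S → A, Real.negMulLog (marginalPMF p S y)) / Real.log s

/-- `p` satisfies the information constraints of the graph: `H(j | N⁻(j)) = 0` for every
vertex `j`, where `H(X | Y) = H(X ∪ Y) − H(Y)`. -/
def InfoConstraints {V A : Type*} [Fintype V] [DecidableEq V] [Fintype A] [DecidableEq A]
    (E : V → V → Prop) [DecidableRel E] (s : ℕ) (p : (V → A) → ℝ) : Prop :=
  ∀ j : V, Hent s p (insert j (inNbr E j)) - Hent s p (inNbr E j) = 0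

/-- The (private) entropy `E(G,s)` of the graph over an alphabet of size `s`:
the sup of `H_p(V)` over probability distributions on `A^V` (`A = Fin s`)
satisfying the information constraints of the graph. -/
noncomputable def graphEntropy {V : Type*} [Fintype V] [DecidableEq V]
    (E : V → V → Prop) [DecidableRel E] (s : ℕ) : ℝ :=
  sSup {h : ℝ | ∃ p : (V → Fin s) → ℝ,
    IsProbDist p ∧ InfoConstraints E s p ∧ h = Hent s p Finset.univ}

/-- The general entropy `E(G) = sup_{s ≥ 2} E(G,s)`. -/
noncomputable def genEntropy {V : Type*} [Fintype V] [DecidableEq V]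
    (E : V → V → Prop) [DecidableRel E] : ℝ :=
  sSup {h : ℝ | ∃ s : ℕ, 2 ≤ s ∧ h = graphEntropy E s}

/-- A guessing strategy: each vertex `j` guesses a value `g j x` which may only depend on
the values `x i` for in-neighbours `i` of `j`. -/
def IsStrategy {V A : Type*} (E : V → V → Prop) (g : V → (V → A) → A) : Prop :=
  ∀ j x y, (∀ i, E i j → x i = y i) → g j x = g j y

/-- The set of assignments at which all players guess correctly. -/
def correctSet {V A : Type*} [Fintype V] [DecidableEq V] [Fintype A] [DecidableEq A]
    (g : V → (V → A) → A) : Finset (V → A) :=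
  Finset.univ.filter (fun x => ∀ j, g j x = x j)

/-- The maximal number of assignments at which all players guess correctly,
over all guessing strategies (over the alphabet `Fin s`). -/
noncomputable def maxCorrect {V : Type*} [Fintype V] [DecidableEq V]
    (E : V → V → Prop) [DecidableRel E] (s : ℕ) : ℕ :=
  sSup {m : ℕ | ∃ g : V → (V → Fin s) → Fin s, IsStrategy E g ∧ m = (correctSet g).card}

/-- The maximal probability (with `x` uniform on `A^V`) that all players guess correctly. -/
noncomputable def maxProb {V : Type*} [Fintype V] [DecidableEq V]
    (E : V → V → Prop) [DecidableRel E] (s : ℕ) : ℝ :=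
  (maxCorrect E s : ℝ) / (s : ℝ) ^ Fintype.card V

/-- The guessing number `g(G,s)`: the unique `α` with maximal success probability
`(1/s)^(n−α)`, i.e. `α = n + log_s (maximal probability)`. -/
noncomputable def guessingNumber {V : Type*} [Fintype V] [DecidableEq V]
    (E : V → V → Prop) [DecidableRel E] (s : ℕ) : ℝ :=
  (Fintype.card V : ℝ) + Real.logb s (maxProb E s)

/-- The general guessing number `g(G) = sup_{s ≥ 2} g(G,s)`. -/
noncomputable def genGuessing {V : Type*} [Fintype V] [DecidableEq V]
    (E : V → V → Prop) [DecidableRel E] : ℝ :=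
  sSup {h : ℝ | ∃ s : ℕ, 2 ≤ s ∧ h = guessingNumber E s}

/-! ## Entropy-like functions -/

/-- An S-entropy-like function: `f ∅ = 0`, monotone and submodular (the polymatroidal
axioms, equivalently Shannon's information inequalities). -/
def SEntLike {U : Type*} [DecidableEq U] (f : Finset U → ℝ) : Prop :=
  f ∅ = 0 ∧ (∀ X Y, X ⊆ Y → f X ≤ f Y) ∧ ∀ X Y, f (X ∩ Y) + f (X ∪ Y) ≤ f X + f Y

/-- Mutual information `I_f(X;Y|Z)` of an entropy-like function. -/
def mutI {U : Type*} [DecidableEq U] (f : Finset U → ℝ) (X Y Z : Finset U) : ℝ :=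
  f (X ∪ Z) + f (Y ∪ Z) - f (X ∪ Y ∪ Z) - f Z

/-- A Zhang–Yeung entropy-like function: S-entropy-like and satisfying the ZY
non-Shannon information inequality for all `A B C D`. -/
def ZYEntLike {U : Type*} [DecidableEq U] (f : Finset U → ℝ) : Prop :=
  SEntLike f ∧ ∀ A B C D : Finset U,
    2 * mutI f C D ∅ ≤ mutI f A B ∅ + mutI f A (C ∪ D) ∅ + 3 * mutI f C D A + mutI f C D B

/-- `f` satisfies the information constraints of the graph:
`f(N⁻(j) ∪ {j}) = f(N⁻(j))` for every vertex `j`. -/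
def FConstraints {V : Type*} [Fintype V] [DecidableEq V]
    (E : V → V → Prop) [DecidableRel E] (f : Finset V → ℝ) : Prop :=
  ∀ j : V, f (insert j (inNbr E j)) = f (inNbr E j)

/-- The S-entropy `E_S(G)`: the maximal value of `f(V)` over normalized S-entropy-like
functions satisfying the information constraints of `G`. -/
noncomputable def SEnt {V : Type*} [Fintype V] [DecidableEq V]
    (E : V → V → Prop) [DecidableRel E] : ℝ :=
  sSup {h : ℝ | ∃ f : Finset V → ℝ,
    SEntLike f ∧ (∀ j : V, f {j} ≤ 1) ∧ FConstraints E f ∧ h = f Finset.univ}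

/-- The ZY-entropy `E_ZY(G)`. -/
noncomputable def ZYEnt {V : Type*} [Fintype V] [DecidableEq V]
    (E : V → V → Prop) [DecidableRel E] : ℝ :=
  sSup {h : ℝ | ∃ f : Finset V → ℝ,
    ZYEntLike f ∧ (∀ j : V, f {j} ≤ 1) ∧ FConstraints E f ∧ h = f Finset.univ}

/-! ## Acyclicity -/

/-- The subgraph induced on `S` is acyclic: no directed cycle within `S`. -/
def AcyclicOn {V : Type*} (E : V → V → Prop) (S : Finset V) : Prop :=
  ∀ v ∈ S, ¬ Relation.TransGen (fun a b => a ∈ S ∧ b ∈ S ∧ E a b) v v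

/-- The acyclic independence number: the maximal size of a vertex set inducing an
acyclic subgraph. -/
noncomputable def acycIndepNum {V : Type*} [Fintype V] (E : V → V → Prop) : ℕ :=
  sSup {k : ℕ | ∃ S : Finset V, AcyclicOn E S ∧ k = S.card}

/-! ## Index codes -/

/-- An index code protocol: a broadcast map `Φ` together with decoding functions `d j`
(depending only on the in-neighbour values and the broadcast message) recovering `x j`. -/
def IsIndexCode {V A W : Type*} (E : V → V → Prop)
    (Φ : (V → A) → W) (d : V → (V → A) → W → A) : Prop :=
  (∀ (j : V) (x y : V → A) (w : W), (∀ i, E i j → x i = y i) → d j x w = d j y w) ∧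
  ∀ (x : V → A) (j : V), d j x (Φ x) = x j

/-- The length `log_s |Φ(A^V)|` of an index code protocol. -/
noncomputable def protocolLength {V A W : Type*} [Fintype V] [DecidableEq V] [Fintype A]
    [Fintype W] [DecidableEq W] (s : ℕ) (Φ : (V → A) → W) : ℝ :=
  Real.logb s ((Finset.univ.image Φ).card)

/-- The base-`s` entropy of the broadcast message `Φ(x)` for `x` uniform on `A^V`. -/
noncomputable def protocolEntropy {V A W : Type*} [Fintype V] [DecidableEq V] [Fintype A]
    [DecidableEq A] [Fintype W] [DecidableEq W] (s : ℕ) (Φ : (V → A) → W) : ℝ :=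
  (∑ w : W, Real.negMulLog
    (((Finset.univ.filter (fun x : V → A => Φ x = w)).card : ℝ) / (s : ℝ) ^ Fintype.card V))
    / Real.log s

/-- `i(G,s)`: the minimal length of an index code for `G` over `Fin s`. -/
noncomputable def indexCodeLen {V : Type*} [Fintype V] [DecidableEq V]
    (E : V → V → Prop) [DecidableRel E] (s : ℕ) : ℝ :=
  sInf {h : ℝ | ∃ (W : Type) (iW : Fintype W) (dW : DecidableEq W)
    (Φ : (V → Fin s) → W) (d : V → (V → Fin s) → W → Fin s),
    IsIndexCode E Φ d ∧ h = @protocolLength V (Fin s) W _ _ _ iW dW s Φ}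

/-- `i_entro(G,s)`: the minimal entropy of an index code for `G` over `Fin s`. -/
noncomputable def indexCodeEntro {V : Type*} [Fintype V] [DecidableEq V]
    (E : V → V → Prop) [DecidableRel E] (s : ℕ) : ℝ :=
  sInf {h : ℝ | ∃ (W : Type) (iW : Fintype W) (dW : DecidableEq W)
    (Φ : (V → Fin s) → W) (d : V → (V → Fin s) → W → Fin s),
    IsIndexCode E Φ d ∧ h = @protocolEntropy V (Fin s) W _ _ _ _ iW dW s Φ}

/-- The information constraints on `V ∪ {w}` (`w = none`) used to define the S/ZY-minimal
index code: `f(N⁻(j) ∪ {w} ∪ {j}) = f(N⁻(j) ∪ {w})` for each `j`, `f(V ∪ {w}) = f(V)`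
and `f(V) = n`. -/
def WConstraints {V : Type*} [Fintype V] [DecidableEq V]
    (E : V → V → Prop) [DecidableRel E] (f : Finset (Option V) → ℝ) : Prop :=
  (∀ j : V, f (insert (some j) (insert none ((inNbr E j).image some)))
      = f (insert none ((inNbr E j).image some))) ∧
  f (insert none ((Finset.univ : Finset V).image some))
      = f ((Finset.univ : Finset V).image some) ∧
  f ((Finset.univ : Finset V).image some) = (Fintype.card V : ℝ)

/-- The S-minimal index code `i_S(G)`. -/
noncomputable def iS {V : Type*} [Fintype V] [DecidableEq V]
    (E : V → V → Prop) [DecidableRel E] : ℝ :=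
  sInf {h : ℝ | ∃ f : Finset (Option V) → ℝ,
    SEntLike f ∧ (∀ j : V, f {some j} ≤ 1) ∧ WConstraints E f ∧ h = f {none}}

/-- The ZY-minimal index code `i_ZY(G)`. -/
noncomputable def iZY {V : Type*} [Fintype V] [DecidableEq V]
    (E : V → V → Prop) [DecidableRel E] : ℝ :=
  sInf {h : ℝ | ∃ f : Finset (Option V) → ℝ,
    ZYEntLike f ∧ (∀ j : V, f {some j} ≤ 1) ∧ WConstraints E f ∧ h = f {none}}

/-! ## The bidirected pentagon `C5` -/

/-- The pentagon with bidirected edges: vertices `Fin 5`, edges between cyclically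
adjacent vertices. -/
def E5 : Fin 5 → Fin 5 → Prop := fun i j => (i.1 + 1) % 5 = j.1 ∨ (j.1 + 1) % 5 = i.1

instance : DecidableRel E5 := fun i j => by unfold E5; infer_instance
namespace PentagonAux

open Finset Real

/-! ### Generic entropy infrastructure (alphabet `Fin 2`) -/

lemma fin2cases (a : Fin 2) : a = 0 ∨ a = 1 := by omega

section Infra

variable {V : Type*} [Fintype V] [DecidableEq V]

/-- Extend `y : ↥N → Fin 2` to `↥(insert j N)` by value `a` at `j`. -/
def ext2 (j : V) (N : Finset V) (a : Fin 2) (y : ↥N → Fin 2) :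
    ↥(insert j N : Finset V) → Fin 2 :=
  fun i => if h : i.1 ∈ N then y ⟨i.1, h⟩ else a

variable (p : (V → Fin 2) → ℝ)

lemma marginal_insert (j : V) (N : Finset V) (hj : j ∉ N) (y : ↥N → Fin 2) :
    marginalPMF p N y =
      marginalPMF p (insert j N) (ext2 j N 0 y) +
      marginalPMF p (insert j N) (ext2 j N 1 y) := by
  unfold marginalPMF
  rw [← Finset.sum_add_distrib]
  refine Finset.sum_congr rfl (fun x _ => ?_)
  by_cases hC : ∀ i : ↥N, x i.1 = y i
  · have hCx : ∀ a : Fin 2, x j = a →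
        ∀ i : ↥(insert j N : Finset V), x i.1 = ext2 j N a y i := by
      intro a ha i
      unfold ext2
      split
      · next h => exact hC ⟨i.1, h⟩
      · next h =>
          have : i.1 = j := by
            rcases Finset.mem_insert.mp i.2 with h' | h'
            · exact h'
            · exact absurd h' h
          rw [this, ha]
    have hnCx : ∀ a : Fin 2, x j ≠ a →
        ¬ ∀ i : ↥(insert j N : Finset V), x i.1 = ext2 j N a y i := by
      intro a ha hA
      have h1 := hA ⟨j, Finset.mem_insert_self j N⟩
      unfold ext2 at h1
      rw [dif_neg hj] at h1
      exact ha h1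
    rcases fin2cases (x j) with h0 | h1
    · rw [if_pos hC, if_pos (hCx 0 h0), if_neg (hnCx 1 (by rw [h0]; decide)), add_zero]
    · rw [if_pos hC, if_pos (hCx 1 h1), if_neg (hnCx 0 (by rw [h1]; decide)), zero_add]
  · have hnc : ∀ a : Fin 2, ¬ ∀ i : ↥(insert j N : Finset V), x i.1 = ext2 j N a y i := by
      intro a hA
      apply hC
      intro i
      have h1 := hA ⟨i.1, Finset.mem_insert_of_mem i.2⟩
      unfold ext2 at h1
      rw [dif_pos i.2] at h1
      exact h1
    rw [if_neg hC, if_neg (hnc 0), if_neg (hnc 1), add_zero]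

/-- The equivalence `(Fin 2 × (↥N → Fin 2)) ≃ (↥(insert j N) → Fin 2)`. -/
def insEquiv (j : V) (N : Finset V) (hj : j ∉ N) :
    (Fin 2 × (↥N → Fin 2)) ≃ (↥(insert j N : Finset V) → Fin 2) where
  toFun q := ext2 j N q.1 q.2
  invFun y' := (y' ⟨j, Finset.mem_insert_self j N⟩,
    fun i => y' ⟨i.1, Finset.mem_insert_of_mem i.2⟩)
  left_inv q := by
    refine Prod.ext ?_ ?_
    · show ext2 j N q.1 q.2 ⟨j, _⟩ = q.1
      unfold ext2
      exact dif_neg hj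
    · funext i
      show ext2 j N q.1 q.2 ⟨i.1, _⟩ = q.2 i
      unfold ext2
      rw [dif_pos i.2]
  right_inv y' := by
    funext i
    unfold ext2
    dsimp only
    split
    · next h => exact congrArg y' (Subtype.ext rfl)
    · next h =>
        have : j = i.1 := by
          rcases Finset.mem_insert.mp i.2 with h' | h'
          · exact h'.symm
          · exact absurd h' h
        exact congrArg y' (Subtype.ext this)

lemma Hsum_insert (j : V) (N : Finset V) (hj : j ∉ N) :
    ∑ y' : ↥(insert j N : Finset V) → Fin 2,
        Real.negMulLog (marginalPMF p (insert j N) y')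
      = ∑ y : ↥N → Fin 2,
          (Real.negMulLog (marginalPMF p (insert j N) (ext2 j N 0 y)) +
           Real.negMulLog (marginalPMF p (insert j N) (ext2 j N 1 y))) := by
  rw [← Equiv.sum_comp (insEquiv j N hj)
    (fun y' => Real.negMulLog (marginalPMF p (insert j N) y'))]
  rw [Fintype.sum_prod_type, Fin.sum_univ_two, ← Finset.sum_add_distrib]
  rfl

lemma marginal_nonneg (hp0 : ∀ x, 0 ≤ p x) (S : Finset V) (y : ↥S → Fin 2) :
    0 ≤ marginalPMF p S y := by
  refine Finset.sum_nonneg (fun x _ => ?_)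
  split
  · exact hp0 x
  · exact le_refl 0

lemma le_marginal (hp0 : ∀ x, 0 ≤ p x) (S : Finset V) (y : ↥S → Fin 2)
    (x : V → Fin 2) (hx : ∀ i : ↥S, x i.1 = y i) : p x ≤ marginalPMF p S y := by
  have h := Finset.single_le_sum
    (f := fun x' : V → Fin 2 => if ∀ i : ↥S, x' i.1 = y i then p x' else 0)
    (fun x' _ => by split; exacts [hp0 x', le_refl 0]) (Finset.mem_univ x)
  rw [if_pos hx] at h
  unfold marginalPMF
  exact h

lemma marginal_pos_elim (hp0 : ∀ x, 0 ≤ p x) {S : Finset V} {y : ↥S → Fin 2}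
    (h : marginalPMF p S y ≠ 0) : ∃ x, p x ≠ 0 ∧ ∀ i : ↥S, x i.1 = y i := by
  by_contra hn
  push_neg at hn
  apply h
  refine Finset.sum_eq_zero (fun x _ => ?_)
  split
  · next hc =>
      by_contra hpx
      obtain ⟨i, hi⟩ := hn x hpx
      exact hi (hc i)
  · rfl

end Infra

/-! ### negMulLog subadditivity -/

lemma nML_add_lt {a b : ℝ} (ha : 0 < a) (hb : 0 < b) :
    Real.negMulLog (a + b) < Real.negMulLog a + Real.negMulLog b := by
  have h1 : Real.log a < Real.log (a + b) := Real.log_lt_log ha (by linarith)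
  have h2 : Real.log b < Real.log (a + b) := Real.log_lt_log hb (by linarith)
  have h1' := mul_lt_mul_of_pos_left h1 ha
  have h2' := mul_lt_mul_of_pos_left h2 hb
  simp only [Real.negMulLog]
  nlinarith

lemma nML_add_le {a b : ℝ} (ha : 0 ≤ a) (hb : 0 ≤ b) :
    Real.negMulLog (a + b) ≤ Real.negMulLog a + Real.negMulLog b := by
  rcases eq_or_lt_of_le ha with h | h
  · simp [← h]
  rcases eq_or_lt_of_le hb with h' | h'
  · simp [← h']
  · exact (nML_add_lt h h').le

lemma nML_add_eq {a b : ℝ} (ha : 0 ≤ a) (hb : 0 ≤ b)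
    (h : Real.negMulLog a + Real.negMulLog b - Real.negMulLog (a + b) = 0) :
    a = 0 ∨ b = 0 := by
  by_contra hn
  push_neg at hn
  have := nML_add_lt (lt_of_le_of_ne ha (Ne.symm hn.1)) (lt_of_le_of_ne hb (Ne.symm hn.2))
  linarith

end PentagonAux

namespace PentagonAux

open Finset Real

section Core

variable {V : Type*} [Fintype V] [DecidableEq V] (p : (V → Fin 2) → ℝ)

lemma Hdiff_eq (j : V) (N : Finset V) (hj : j ∉ N) :
    Hent 2 p (insert j N) - Hent 2 p N =
      (∑ y : ↥N → Fin 2,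
        (Real.negMulLog (marginalPMF p (insert j N) (ext2 j N 0 y)) +
         Real.negMulLog (marginalPMF p (insert j N) (ext2 j N 1 y)) -
         Real.negMulLog (marginalPMF p (insert j N) (ext2 j N 0 y) +
           marginalPMF p (insert j N) (ext2 j N 1 y)))) / Real.log 2 := by
  unfold Hent
  rw [Hsum_insert p j N hj]
  have hN : ∑ y : ↥N → Fin 2, Real.negMulLog (marginalPMF p N y)
      = ∑ y : ↥N → Fin 2, Real.negMulLog
          (marginalPMF p (insert j N) (ext2 j N 0 y) +
           marginalPMF p (insert j N) (ext2 j N 1 y)) :=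
    Finset.sum_congr rfl (fun y _ => congrArg _ (marginal_insert p j N hj y))
  rw [hN, div_sub_div_same, ← Finset.sum_sub_distrib]
  norm_num

lemma constraint_imp_det (hp0 : ∀ x, 0 ≤ p x) (j : V) (N : Finset V) (hj : j ∉ N)
    (hc : Hent 2 p (insert j N) - Hent 2 p N = 0) :
    ∀ x x', p x ≠ 0 → p x' ≠ 0 → (∀ i ∈ N, x i = x' i) → x j = x' j := by
  have hlog : Real.log 2 ≠ 0 := ne_of_gt (Real.log_pos one_lt_two)
  rw [Hdiff_eq p j N hj] at hc
  rw [div_eq_zero_iff] at hc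
  have hsum := hc.resolve_right hlog
  have hterm := (Finset.sum_eq_zero_iff_of_nonneg (fun y _ => by
    have := nML_add_le (marginal_nonneg p hp0 (insert j N) (ext2 j N 0 y))
      (marginal_nonneg p hp0 (insert j N) (ext2 j N 1 y))
    linarith)).mp hsum
  intro x x' hx hx' hagree
  by_contra hne
  set y : ↥N → Fin 2 := fun i => x i.1 with hy
  have hzero : marginalPMF p (insert j N) (ext2 j N 0 y) = 0 ∨
      marginalPMF p (insert j N) (ext2 j N 1 y) = 0 :=
    nML_add_eq (marginal_nonneg p hp0 _ _) (marginal_nonneg p hp0 _ _)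
      (hterm y (Finset.mem_univ y))
  have hx_ext : ∀ a : Fin 2, x j = a →
      ∀ i : ↥(insert j N : Finset V), x i.1 = ext2 j N a y i := by
    intro a ha i
    unfold ext2
    split
    · rfl
    · next h =>
        have : i.1 = j := by
          rcases Finset.mem_insert.mp i.2 with h' | h'
          · exact h'
          · exact absurd h' h
        rw [this, ha]
  have hx'_ext : ∀ a : Fin 2, x' j = a →
      ∀ i : ↥(insert j N : Finset V), x' i.1 = ext2 j N a y i := by
    intro a ha i
    unfold ext2
    split
    · next h => exact (hagree i.1 h).symm
    · next h =>
        have : i.1 = j := by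
          rcases Finset.mem_insert.mp i.2 with h' | h'
          · exact h'
          · exact absurd h' h
        rw [this, ha]
  have hm : ∀ a : Fin 2, x j = a → marginalPMF p (insert j N) (ext2 j N a y) ≠ 0 := by
    intro a ha
    have h1 := le_marginal p hp0 (insert j N) (ext2 j N a y) x (hx_ext a ha)
    have h2 := lt_of_le_of_ne (hp0 x) (Ne.symm hx)
    exact ne_of_gt (lt_of_lt_of_le h2 h1)
  have hm' : ∀ a : Fin 2, x' j = a → marginalPMF p (insert j N) (ext2 j N a y) ≠ 0 := by
    intro a ha
    have h1 := le_marginal p hp0 (insert j N) (ext2 j N a y) x' (hx'_ext a ha)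
    have h2 := lt_of_le_of_ne (hp0 x') (Ne.symm hx')
    exact ne_of_gt (lt_of_lt_of_le h2 h1)
  rcases fin2cases (x j) with h0 | h0 <;> rcases fin2cases (x' j) with h1 | h1
  · exact hne (h0.trans h1.symm)
  · rcases hzero with hz | hz
    · exact hm 0 h0 hz
    · exact hm' 1 h1 hz
  · rcases hzero with hz | hz
    · exact hm' 0 h1 hz
    · exact hm 1 h0 hz
  · exact hne (h0.trans h1.symm)

lemma det_imp_constraint (hp0 : ∀ x, 0 ≤ p x) (j : V) (N : Finset V) (hj : j ∉ N)
    (hdet : ∀ x x', p x ≠ 0 → p x' ≠ 0 → (∀ i ∈ N, x i = x' i) → x j = x' j) :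
    Hent 2 p (insert j N) - Hent 2 p N = 0 := by
  rw [Hdiff_eq p j N hj, div_eq_zero_iff]
  left
  refine Finset.sum_eq_zero (fun y _ => ?_)
  have hzero : marginalPMF p (insert j N) (ext2 j N 0 y) = 0 ∨
      marginalPMF p (insert j N) (ext2 j N 1 y) = 0 := by
    by_contra hn
    push_neg at hn
    obtain ⟨x, hx, hxc⟩ := marginal_pos_elim p hp0 hn.1
    obtain ⟨x', hx', hx'c⟩ := marginal_pos_elim p hp0 hn.2
    have hagree : ∀ i ∈ N, x i = x' i := by
      intro i hi
      have h1 := hxc ⟨i, Finset.mem_insert_of_mem hi⟩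
      have h2 := hx'c ⟨i, Finset.mem_insert_of_mem hi⟩
      unfold ext2 at h1 h2
      rw [dif_pos hi] at h1 h2
      exact h1.trans h2.symm
    have hj' := hdet x x' hx hx' hagree
    have h1 := hxc ⟨j, Finset.mem_insert_self j N⟩
    have h2 := hx'c ⟨j, Finset.mem_insert_self j N⟩
    unfold ext2 at h1 h2
    rw [dif_neg hj] at h1 h2
    rw [hj', h2] at h1
    exact absurd h1 (by decide)
  rcases hzero with hz | hz <;> rw [hz] <;> simp

/-! ### Entropy over the full vertex set -/

lemma marginal_univ (y : ↥(Finset.univ : Finset V) → Fin 2) :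
    marginalPMF p Finset.univ y = p (fun i => y ⟨i, Finset.mem_univ i⟩) := by
  unfold marginalPMF
  have hiff : ∀ x : V → Fin 2,
      (∀ i : ↥(Finset.univ : Finset V), x i.1 = y i) ↔
        x = fun i => y ⟨i, Finset.mem_univ i⟩ := by
    intro x
    constructor
    · intro h
      funext i
      exact h ⟨i, Finset.mem_univ i⟩
    · intro h i
      rw [h]
  rw [Finset.sum_congr rfl (fun x _ => if_congr (hiff x) rfl rfl),
    Finset.sum_ite_eq' Finset.univ _ p, if_pos (Finset.mem_univ _)]

def univEquiv : (↥(Finset.univ : Finset V) → Fin 2) ≃ ((V → Fin 2)) :=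
  (Equiv.subtypeUnivEquiv (fun x => Finset.mem_univ x)).arrowCongr (Equiv.refl _)

lemma Hent_univ_eq :
    Hent 2 p (Finset.univ : Finset V)
      = (∑ x : V → Fin 2, Real.negMulLog (p x)) / Real.log 2 := by
  unfold Hent
  have h1 : ∑ y : ↥(Finset.univ : Finset V) → Fin 2,
      Real.negMulLog (marginalPMF p Finset.univ y)
      = ∑ x : V → Fin 2, Real.negMulLog
          (marginalPMF p Finset.univ ((univEquiv (V := V)).symm x)) :=
    (Equiv.sum_comp (univEquiv (V := V)).symm _).symm
  rw [h1]
  have h2 : ∀ x : V → Fin 2,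
      marginalPMF p Finset.univ ((univEquiv (V := V)).symm x) = p x := by
    intro x
    rw [marginal_univ]
    rfl
  rw [Finset.sum_congr rfl (fun x _ => congrArg _ (h2 x))]
  norm_num

lemma sum_nML_le_log_card (hp : IsProbDist p) :
    ∑ x : V → Fin 2, Real.negMulLog (p x)
      ≤ Real.log ((Finset.univ.filter (fun x : V → Fin 2 => p x ≠ 0)).card) := by
  classical
  obtain ⟨hp0, hp1⟩ := hp
  set S := Finset.univ.filter (fun x : V → Fin 2 => p x ≠ 0) with hS
  have hoff : ∀ x : V → Fin 2, x ∉ S → p x = 0 := by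
    intro x hx
    by_contra h
    exact hx (Finset.mem_filter.mpr ⟨Finset.mem_univ x, h⟩)
  have hsumS : ∑ x ∈ S, p x = 1 := by
    rw [← hp1]
    exact Finset.sum_subset (Finset.subset_univ S)
      (fun x _ hx => hoff x hx)
  have hSne : S.Nonempty := by
    by_contra h
    rw [Finset.not_nonempty_iff_eq_empty] at h
    rw [h, Finset.sum_empty] at hsumS
    norm_num at hsumS
  have hKpos : (0 : ℝ) < S.card := by
    have := Finset.card_pos.mpr hSne
    exact_mod_cast this
  have hsuml : ∑ x : V → Fin 2, Real.negMulLog (p x)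
      = ∑ x ∈ S, Real.negMulLog (p x) :=
    (Finset.sum_subset (Finset.subset_univ S)
      (fun x _ hx => by rw [hoff x hx, Real.negMulLog_zero])).symm
  have hjen := Real.concaveOn_negMulLog.le_map_sum
    (t := S) (w := fun _ => ((S.card : ℝ))⁻¹) (p := p)
    (fun i _ => by positivity)
    (by rw [Finset.sum_const, nsmul_eq_mul, mul_inv_cancel₀ (ne_of_gt hKpos)])
    (fun i _ => Set.mem_Ici.mpr (hp0 i))
  simp only [smul_eq_mul, ← Finset.mul_sum] at hjen
  rw [hsumS, mul_one] at hjen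
  have hinv : Real.negMulLog ((S.card : ℝ))⁻¹
      = ((S.card : ℝ))⁻¹ * Real.log (S.card) := by
    simp only [Real.negMulLog, Real.log_inv]
    ring
  rw [hinv] at hjen
  rw [hsuml]
  have := (mul_le_mul_iff_right₀ (inv_pos.mpr hKpos)).mp hjen
  exact this

end Core

end PentagonAux

namespace PentagonAux

open Finset Real

/-! ### The combinatorial core for `C5` over `Fin 2` -/

def edgeRel (x y : Fin 5 → Fin 2) : Prop :=
  ∀ j, (∀ i ∈ inNbr E5 j, x i = y i) → x j = y j

instance : DecidableRel edgeRel := fun x y => by unfold edgeRel; infer_instance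

def allowed : Finset (Fin 5 → Fin 2) :=
  Finset.univ.filter (fun v => v ≠ 0 ∧ edgeRel v 0)

set_option synthInstance.maxSize 2000 in
set_option synthInstance.maxHeartbeats 1000000 in
set_option maxHeartbeats 10000000 in
set_option maxRecDepth 100000 in
theorem no5clique : ∀ a ∈ allowed, ∀ b ∈ allowed, a ≠ b → edgeRel a b →
    ∀ c ∈ allowed, a ≠ c → b ≠ c → edgeRel a c → edgeRel b c →
    ∀ d ∈ allowed, a ≠ d → b ≠ d → c ≠ d → edgeRel a d → edgeRel b d → edgeRel c d →
    ∀ e ∈ allowed, a ≠ e → b ≠ e → c ≠ e → d ≠ e → edgeRel a e → edgeRel b e → edgeRel c e →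
      ¬ edgeRel d e := by decide

lemma edge_shift {x y : Fin 5 → Fin 2} (z : Fin 5 → Fin 2) (he : edgeRel x y) :
    edgeRel (x + z) (y + z) := by
  intro j hag
  have hxy : x j = y j := by
    apply he j
    intro i hi
    have h1 := hag i hi
    simp only [Pi.add_apply] at h1
    exact add_right_cancel h1
  simp only [Pi.add_apply, hxy]

lemma comb (S : Finset (Fin 5 → Fin 2)) (h : ∀ x ∈ S, ∀ y ∈ S, edgeRel x y) :
    S.card ≤ 5 := by
  by_contra hc
  push_neg at hc
  obtain ⟨z, hz⟩ := Finset.card_pos.mp (show 0 < S.card by omega)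
  have hinj : Function.Injective (fun x : Fin 5 → Fin 2 => x + z) :=
    add_left_injective z
  set T : Finset (Fin 5 → Fin 2) := (S.erase z).image (fun x => x + z) with hT
  have hzz : z + z = 0 := by
    funext i
    simp only [Pi.add_apply, Pi.zero_apply]
    omega
  have hTcard : 5 ≤ T.card := by
    rw [hT, Finset.card_image_of_injective _ hinj, Finset.card_erase_of_mem hz]
    omega
  have hmemT : ∀ v ∈ T, v ∈ allowed := by
    intro v hv
    obtain ⟨x, hx, rfl⟩ := Finset.mem_image.mp hv
    obtain ⟨hxz, hxS⟩ := Finset.mem_erase.mp hx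
    refine Finset.mem_filter.mpr ⟨Finset.mem_univ _, ?_, ?_⟩
    · intro h0
      apply hxz
      apply hinj
      show x + z = z + z
      rw [hzz, h0]
    · have := edge_shift z (h x hxS z hz)
      rwa [hzz] at this
  have hedgeT : ∀ u ∈ T, ∀ v ∈ T, edgeRel u v := by
    intro u hu v hv
    obtain ⟨x, hx, rfl⟩ := Finset.mem_image.mp hu
    obtain ⟨x', hx', rfl⟩ := Finset.mem_image.mp hv
    exact edge_shift z (h x (Finset.mem_erase.mp hx).2 x' (Finset.mem_erase.mp hx').2)
  -- extract five distinct elements of `T`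
  obtain ⟨a, ha⟩ := Finset.card_pos.mp (by omega : 0 < T.card)
  have h1 : 4 ≤ (T.erase a).card := by rw [Finset.card_erase_of_mem ha]; omega
  obtain ⟨b, hb⟩ := Finset.card_pos.mp (by omega : 0 < (T.erase a).card)
  have h2 : 3 ≤ ((T.erase a).erase b).card := by rw [Finset.card_erase_of_mem hb]; omega
  obtain ⟨c, hcm⟩ := Finset.card_pos.mp (by omega : 0 < ((T.erase a).erase b).card)
  have h3 : 2 ≤ (((T.erase a).erase b).erase c).card := by
    rw [Finset.card_erase_of_mem hcm]; omega
  obtain ⟨d, hd⟩ := Finset.card_pos.mp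
    (by omega : 0 < (((T.erase a).erase b).erase c).card)
  have h4 : 1 ≤ ((((T.erase a).erase b).erase c).erase d).card := by
    rw [Finset.card_erase_of_mem hd]; omega
  obtain ⟨e, he⟩ := Finset.card_pos.mp
    (by omega : 0 < ((((T.erase a).erase b).erase c).erase d).card)
  obtain ⟨hed, hec, heb, hea, heT⟩ :
      e ≠ d ∧ e ≠ c ∧ e ≠ b ∧ e ≠ a ∧ e ∈ T := by
    simp only [Finset.mem_erase] at he
    exact ⟨he.1, he.2.1, he.2.2.1, he.2.2.2.1, he.2.2.2.2⟩
  obtain ⟨hdc, hdb, hda, hdT⟩ : d ≠ c ∧ d ≠ b ∧ d ≠ a ∧ d ∈ T := by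
    simp only [Finset.mem_erase] at hd
    exact ⟨hd.1, hd.2.1, hd.2.2.1, hd.2.2.2⟩
  obtain ⟨hcb, hca, hcT⟩ : c ≠ b ∧ c ≠ a ∧ c ∈ T := by
    simp only [Finset.mem_erase] at hcm
    exact ⟨hcm.1, hcm.2.1, hcm.2.2⟩
  obtain ⟨hba, hbT⟩ : b ≠ a ∧ b ∈ T := by
    simp only [Finset.mem_erase] at hb
    exact ⟨hb.1, hb.2⟩
  exact no5clique a (hmemT a ha) b (hmemT b hbT) (Ne.symm hba) (hedgeT a ha b hbT)
    c (hmemT c hcT) (Ne.symm hca) (Ne.symm hcb) (hedgeT a ha c hcT) (hedgeT b hbT c hcT)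
    d (hmemT d hdT) (Ne.symm hda) (Ne.symm hdb) (Ne.symm hdc)
    (hedgeT a ha d hdT) (hedgeT b hbT d hdT) (hedgeT c hcT d hdT)
    e (hmemT e heT) (Ne.symm hea) (Ne.symm heb) (Ne.symm hec) (Ne.symm hed)
    (hedgeT a ha e heT) (hedgeT b hbT e heT) (hedgeT c hcT e heT)
    (hedgeT d hdT e heT)

lemma hjN : ∀ j : Fin 5, j ∉ inNbr E5 j := by decide

/-! ### Upper bound -/

lemma upper_main (p : (Fin 5 → Fin 2) → ℝ) (hp : IsProbDist p)
    (hic : InfoConstraints E5 2 p) : Hent 2 p Finset.univ ≤ Real.logb 2 5 := by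
  classical
  obtain ⟨hp0, hp1⟩ := hp
  set S := Finset.univ.filter (fun x : Fin 5 → Fin 2 => p x ≠ 0) with hS
  have hpair : ∀ x ∈ S, ∀ y ∈ S, edgeRel x y := by
    intro x hx y hy j hagree
    exact constraint_imp_det p hp0 j (inNbr E5 j) (hjN j) (hic j) x y
      (Finset.mem_filter.mp hx).2 (Finset.mem_filter.mp hy).2 hagree
  have hcard : S.card ≤ 5 := comb S hpair
  have hle := sum_nML_le_log_card p ⟨hp0, hp1⟩
  rw [Hent_univ_eq]
  have hlog5 : Real.log (S.card : ℝ) ≤ Real.log 5 := by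
    rcases Nat.eq_zero_or_pos S.card with h0 | h0
    · rw [h0]
      simp only [Nat.cast_zero, Real.log_zero]
      exact Real.log_nonneg (by norm_num)
    · exact Real.log_le_log (by exact_mod_cast h0) (by exact_mod_cast hcard)
  have hlog2 : (0 : ℝ) < Real.log 2 := Real.log_pos one_lt_two
  rw [Real.logb]
  rw [div_le_div_iff_of_pos_right hlog2]
  calc ∑ x : Fin 5 → Fin 2, Real.negMulLog (p x)
      ≤ Real.log (S.card : ℝ) := hle
    _ ≤ Real.log 5 := hlog5

/-! ### Lower bound : the uniform distribution on the 5 cyclic shifts of `11010` -/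

def S0 : Finset (Fin 5 → Fin 2) :=
  {![1,1,0,1,0], ![0,1,1,0,1], ![1,0,1,1,0], ![0,1,0,1,1], ![1,0,1,0,1]}

noncomputable def p0 : (Fin 5 → Fin 2) → ℝ := fun x => if x ∈ S0 then (5 : ℝ)⁻¹ else 0

lemma S0card : S0.card = 5 := by decide

lemma S0det : ∀ j : Fin 5, ∀ x ∈ S0, ∀ x' ∈ S0,
    (∀ i ∈ inNbr E5 j, x i = x' i) → x j = x' j := by decide

lemma p0_nonneg : ∀ x, 0 ≤ p0 x := by
  intro x
  unfold p0
  split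
  · norm_num
  · exact le_refl 0

lemma p0_ne_iff {x : Fin 5 → Fin 2} : p0 x ≠ 0 ↔ x ∈ S0 := by
  unfold p0
  split
  · next h => simpa using h
  · next h => simpa using h

lemma p0_prob : IsProbDist p0 := by
  refine ⟨p0_nonneg, ?_⟩
  unfold p0
  rw [Finset.sum_ite_mem, Finset.univ_inter, Finset.sum_const, S0card, nsmul_eq_mul]
  norm_num

lemma p0_constraints : InfoConstraints E5 2 p0 := by
  intro j
  apply det_imp_constraint p0 p0_nonneg j (inNbr E5 j) (hjN j)
  intro x x' hx hx' hagree
  exact S0det j x (p0_ne_iff.mp hx) x' (p0_ne_iff.mp hx') hagree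

lemma p0_entropy : Hent 2 p0 Finset.univ = Real.logb 2 5 := by
  rw [Hent_univ_eq]
  have h1 : ∑ x : Fin 5 → Fin 2, Real.negMulLog (p0 x)
      = ∑ x : Fin 5 → Fin 2, (if x ∈ S0 then Real.negMulLog ((5:ℝ)⁻¹) else 0) := by
    refine Finset.sum_congr rfl (fun x _ => ?_)
    unfold p0
    split
    · rfl
    · rw [Real.negMulLog_zero]
  rw [h1, Finset.sum_ite_mem, Finset.univ_inter, Finset.sum_const, S0card, nsmul_eq_mul]
  have h2 : Real.negMulLog ((5:ℝ)⁻¹) = (5:ℝ)⁻¹ * Real.log 5 := by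
    simp only [Real.negMulLog, Real.log_inv]
    ring
  rw [h2, Real.logb]
  push_cast
  rw [show (5:ℝ) * ((5:ℝ)⁻¹ * Real.log 5) = Real.log 5 by ring]

end PentagonAux


open PentagonAux

/-- The entropy of the bidirected pentagon over a two-letter alphabet
equals `log_2 5`. -/
theorem pentagon_entropy_two_letters : graphEntropy E5 2 = Real.logb 2 5 := by
  unfold graphEntropy
  have hmem : Real.logb 2 5 ∈ {h : ℝ | ∃ p : (Fin 5 → Fin 2) → ℝ,
      IsProbDist p ∧ InfoConstraints E5 2 p ∧ h = Hent 2 p Finset.univ} :=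
    ⟨p0, p0_prob, p0_constraints, p0_entropy.symm⟩
  have hub : ∀ h ∈ {h : ℝ | ∃ p : (Fin 5 → Fin 2) → ℝ,
      IsProbDist p ∧ InfoConstraints E5 2 p ∧ h = Hent 2 p Finset.univ},
      h ≤ Real.logb 2 5 := by
    rintro h ⟨p, hp, hic, rfl⟩
    exact upper_main p hp hic
  exact le_antisymm (csSup_le ⟨_, hmem⟩ hub) (le_csSup ⟨_, hub⟩ hmem)
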